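/- Let (X,d) be a game space, S ⊆ X a nonempty compact subset, and h > 0. Then the trace map π is 1-Lipschitz on X ∪ cyl(h,S) with respect to the metric d' of X_{h,S}: for all x, y ∈ X ∪ cyl(h,S), d(π(x), π(y)) ≤ d'(x,y). Consequently, for every continuous path p whose image is contained in X ∪ cyl(h,S), the length of π∘p in (X,d) is at most the length of p in (X_{h,S},d'). -/

import Mathlib

/-!
Game of Cops and Robber on metric spaces, following Mohar, formalized relative to an
explicit distance function `d : Y → Y → ℝ`.
-/

open Set Filter Topology

/-- The length of (the restriction to `[0,1]` of) a map `p : ℝ → Y` with respect to an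
extended-real-valued cost function `c`, defined as the supremum over all finite monotone
partitions of `[0,1]` of the sums of the costs of consecutive points. -/
noncomputable def elen {Y : Type*} (c : Y → Y → ENNReal) (p : ℝ → Y) : ENNReal :=
  ⨆ q : ℕ × {u : ℕ → ℝ // Monotone u ∧ ∀ i, u i ∈ Set.Icc (0 : ℝ) 1},
    ∑ i ∈ Finset.range q.1, c (p (q.2.1 i)) (p (q.2.1 (i + 1)))

/-- Continuity on `[0,1]` of a map `p : ℝ → Y` with respect to a cost function `c`,
stated in `ε`-`δ` form. -/
def econt {Y : Type*} (c : Y → Y → ENNReal) (p : ℝ → Y) : Prop :=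
  ∀ t ∈ Set.Icc (0 : ℝ) 1, ∀ ε : ENNReal, 0 < ε →
    ∃ δ : ℝ, 0 < δ ∧ ∀ t' ∈ Set.Icc (0 : ℝ) 1, |t' - t| < δ → c (p t) (p t') < ε

/-- `d` is a metric on `Y`. -/
def IsMetricD (Y : Type*) (d : Y → Y → ℝ) : Prop :=
  (∀ x, d x x = 0) ∧ (∀ x y, d x y = 0 → x = y) ∧
    (∀ x y, d x y = d y x) ∧ (∀ x y z, d x z ≤ d x y + d y z)

/-- Compactness of the metric space `(Y,d)`, in its sequential form: every sequence has a
convergent subsequence. -/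
def CompactD (Y : Type*) (d : Y → Y → ℝ) : Prop :=
  ∀ u : ℕ → Y, ∃ (x : Y) (φ : ℕ → ℕ), StrictMono φ ∧
    Filter.Tendsto (fun n => d (u (φ n)) x) Filter.atTop (nhds 0)

/-- `(Y,d)` is a geodesic metric space: any two points `x, y` are joined by a continuous
path `p : [0,1] → Y` whose length equals `d x y`. -/
def IsGeodesicD (Y : Type*) (d : Y → Y → ℝ) : Prop :=
  ∀ x y : Y, ∃ p : ℝ → Y,
    econt (fun a b => ENNReal.ofReal (d a b)) p ∧ p 0 = x ∧ p 1 = y ∧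
      elen (fun a b => ENNReal.ofReal (d a b)) p = ENNReal.ofReal (d x y)

/-- A game space is a (nonempty) compact geodesic metric space. -/
def GameSpaceD (Y : Type*) (d : Y → Y → ℝ) : Prop :=
  Nonempty Y ∧ IsMetricD Y d ∧ CompactD Y d ∧ IsGeodesicD Y d

/-- An agility function: positive, with divergent sum. -/
def IsAgility (τ : ℕ → ℝ) : Prop := (∀ n, 0 < τ n) ∧ ¬ Summable τ

/-- The trajectory of the `k` cops determined by initial positions `c0`, a cop strategy `σ`
(where `σ n` computes the cops' positions at step `n+1` from the robber's positions
`r^0, …, r^(n+1)`), and a robber trajectory `r`. -/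
def copTraj {Y : Type*} {k : ℕ} (c0 : Fin k → Y)
    (σ : (n : ℕ) → (Fin (n + 2) → Y) → Fin k → Y) (r : ℕ → Y) : ℕ → Fin k → Y
  | 0 => c0
  | n + 1 => σ n fun i => r i

/-- The trajectory of the robber determined by his initial position `r0`, a robber strategy
`ρ` (where `ρ n` computes the robber's position at step `n+1` from the cops' positions
`c^0, …, c^n`), and a cop trajectory `c`. -/
def robTraj {Y : Type*} {k : ℕ} (r0 : Y)
    (ρ : (n : ℕ) → (Fin (n + 1) → Fin k → Y) → Y) (c : ℕ → Fin k → Y) : ℕ → Y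
  | 0 => r0
  | n + 1 => ρ n fun i => c i

/-- `k` cops have a winning strategy on `(Y,d)`: for every agility function and every initial
position chosen by the robber there is a cop strategy `σ`, assigning legal cop moves to every
history, such that against every legal robber trajectory the cops come arbitrarily close to
the robber. -/
def CopsWinWith (Y : Type*) (d : Y → Y → ℝ) (k : ℕ) : Prop :=
  ∀ τ : ℕ → ℝ, IsAgility τ → ∀ r0 : Y, ∀ c0 : Fin k → Y,
    ∃ σ : (n : ℕ) → (Fin (n + 2) → Y) → Fin k → Y,
      ∀ r : ℕ → Y, r 0 = r0 → (∀ n, d (r n) (r (n + 1)) ≤ τ (n + 1)) →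
        (∀ n i, d (copTraj c0 σ r n i) (copTraj c0 σ r (n + 1) i) ≤ τ (n + 1)) ∧
          (∀ ε : ℝ, 0 < ε → ∃ n i, d (r n) (copTraj c0 σ r n i) < ε)

/-- The cop number of `(Y,d)`, as an extended natural number: the least `k` such that `k`
cops have a winning strategy (`⊤` if there is no such `k`). -/
noncomputable def copNumber (Y : Type*) (d : Y → Y → ℝ) : ℕ∞ :=
  sInf {m : ℕ∞ | ∃ k : ℕ, m = (k : ℕ∞) ∧ CopsWinWith Y d k}

/-- The robber has a strategy against `k` cops on `(Y,d)` with agility function `τ` which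
guarantees that his moves are legal and that every cop always stays at distance `> ε` from
him, against every legal cop play. -/
def RobberWins (Y : Type*) (d : Y → Y → ℝ) (k : ℕ) (τ : ℕ → ℝ) (ε : ℝ) : Prop :=
  ∃ (r0 : Y) (c0 : Fin k → Y) (ρ : (n : ℕ) → (Fin (n + 1) → Fin k → Y) → Y),
    ∀ c : ℕ → Fin k → Y, c 0 = c0 → (∀ n i, d (c n i) (c (n + 1) i) ≤ τ (n + 1)) →
      (∀ n, d (robTraj r0 ρ c n) (robTraj r0 ρ c (n + 1)) ≤ τ (n + 1)) ∧
        (∀ n i, ε < d (robTraj r0 ρ c n) (c n i))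

/-!
The hat construction `X_{h,S}` of the paper: given a metric space `X`, a subset `S ⊆ X` and
`h > 0`, we glue onto `X` the hat over `S`, consisting of the cylinder `S × [0,h]` with the
`ℓ₁` metric and the top, a cone over `S` of height `H = h + diam S`.  The resulting space is
equipped with the induced length metric: distances are infima of lengths of piecewise paths,
each piece lying in one part and measured with that part's metric.
-/

section Hat

variable {X : Type*} [MetricSpace X]

/-- Points of the cylinder `S × [0,h]`. -/
abbrev CylPt (S : Set X) (h : ℝ) : Type _ := ↥S × ↥(Set.Icc (0 : ℝ) h)

/-- Points of the (un-collapsed) top `S × [0, h + diam S]`. -/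
abbrev TopPt (S : Set X) (h : ℝ) : Type _ := ↥S × ↥(Set.Icc (0 : ℝ) (h + Metric.diam S))

/-- The disjoint union of the three parts of `X_{h,S}`: the space `X`, the cylinder, and
the top. -/
abbrev PrePt (S : Set X) (h : ℝ) : Type _ := X ⊕ (CylPt S h ⊕ TopPt S h)

/-- The `ℓ₁` metric `d₁` on the cylinder. -/
noncomputable def cylDist {S : Set X} {h : ℝ} (p q : CylPt S h) : ℝ :=
  dist (p.1 : X) (q.1 : X) + |(p.2 : ℝ) - (q.2 : ℝ)|

/-- The metric `d₂` on the top: the quotient pseudometric of the `ℓ₁` metric on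
`S × [0,H]`, `H = h + diam S`, under collapsing the layer `S × {H}` to a point. -/
noncomputable def topDist {S : Set X} {h : ℝ} (p q : TopPt S h) : ℝ :=
  min (dist (p.1 : X) (q.1 : X) + |(p.2 : ℝ) - (q.2 : ℝ)|)
    ((h + Metric.diam S - (p.2 : ℝ)) + (h + Metric.diam S - (q.2 : ℝ)))

/-- The part-wise cost on the disjoint union: within one part, the metric of that part;
`⊤` across different parts. -/
noncomputable def preDist (S : Set X) (h : ℝ) : PrePt S h → PrePt S h → ENNReal
  | Sum.inl x, Sum.inl y => ENNReal.ofReal (dist x y)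
  | Sum.inr (Sum.inl p), Sum.inr (Sum.inl q) => ENNReal.ofReal (cylDist p q)
  | Sum.inr (Sum.inr p), Sum.inr (Sum.inr q) => ENNReal.ofReal (topDist p q)
  | _, _ => ⊤

/-- The gluing relation defining `X_{h,S}`: each `s ∈ S` is identified with the point
`(s,0)` of the cylinder; the layer `S × {h}` of the cylinder is identified with the layer
`S × {0}` of the top; and the whole layer `S × {H}` of the top is collapsed to one point
(the cone point `z`). -/
inductive Glue (S : Set X) (h : ℝ) : PrePt S h → PrePt S h → Prop
  | base (s : ↥S) (t : ↥(Set.Icc (0 : ℝ) h)) (ht : (t : ℝ) = 0) :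
      Glue S h (Sum.inl (s : X)) (Sum.inr (Sum.inl (s, t)))
  | mid (s : ↥S) (t : ↥(Set.Icc (0 : ℝ) h)) (u : ↥(Set.Icc (0 : ℝ) (h + Metric.diam S)))
      (ht : (t : ℝ) = h) (hu : (u : ℝ) = 0) :
      Glue S h (Sum.inr (Sum.inl (s, t))) (Sum.inr (Sum.inr (s, u)))
  | apex (p q : TopPt S h) (hp : (p.2 : ℝ) = h + Metric.diam S)
      (hq : (q.2 : ℝ) = h + Metric.diam S) :
      Glue S h (Sum.inr (Sum.inr p)) (Sum.inr (Sum.inr q))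

/-- The underlying set of `X_{h,S}`: the quotient of the disjoint union by the gluing. -/
abbrev GlueSp (S : Set X) (h : ℝ) : Type _ := Quot (Glue S h)

end Hat

/-- A piecewise path between two points of a glued space `Quot R`: a finite sequence of
paths, each continuous within a single part (with respect to the part-wise cost `c`), with
consecutive endpoints glued. -/
structure PiecewisePath {Y : Type*} (c : Y → Y → ENNReal) (R : Y → Y → Prop)
    (a b : Quot R) where
  m : ℕ
  piece : Fin (m + 1) → ℝ → Y
  cont : ∀ i, econt c (piece i)
  first : Quot.mk R (piece 0 0) = a
  last : Quot.mk R (piece (Fin.last m) 1) = b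
  link : ∀ i : Fin m, Quot.mk R (piece i.castSucc 1) = Quot.mk R (piece i.succ 0)

/-- The length of a piecewise path: the sum of the lengths of its pieces, each measured with
the corresponding part's metric. -/
noncomputable def PiecewisePath.len {Y : Type*} {c : Y → Y → ENNReal} {R : Y → Y → Prop}
    {a b : Quot R} (P : PiecewisePath c R a b) : ENNReal :=
  ∑ i : Fin (P.m + 1), elen c (P.piece i)

/-- The induced length metric on a glued space: the infimum of lengths of piecewise paths. -/
noncomputable def glueDist {Y : Type*} (c : Y → Y → ENNReal) (R : Y → Y → Prop)
    (a b : Quot R) : ENNReal :=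
  ⨅ P : PiecewisePath c R a b, P.len

section Hat2

variable {X : Type*} [MetricSpace X]

/-- The induced length metric `d'` on `X_{h,S}`, with values in `[0,∞]`. -/
noncomputable def hatDistE (S : Set X) (h : ℝ) (a b : GlueSp S h) : ENNReal :=
  glueDist (preDist S h) (Glue S h) a b

/-- The induced length metric `d'` on `X_{h,S}`, as a real-valued function. -/
noncomputable def hatDist (S : Set X) (h : ℝ) (a b : GlueSp S h) : ℝ :=
  (hatDistE S h a b).toReal

/-- The canonical inclusion `X ↪ X_{h,S}`. -/
def iotaX (S : Set X) (h : ℝ) (x : X) : GlueSp S h := Quot.mk _ (Sum.inl x)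

end Hat2

section Trace

variable {X : Type*} [MetricSpace X]

/-- Points of the subset `X ∪ cyl(h,S)` of `X_{h,S}` (before gluing). -/
abbrev BasePt (S : Set X) (h : ℝ) : Type _ := X ⊕ CylPt S h

/-- The trace `π` of a point of `X ∪ cyl(h,S)`: `π(x) = x` for `x ∈ X` and `π((s,t)) = s`
for cylinder points. -/
def trace {S : Set X} {h : ℝ} : BasePt S h → X
  | Sum.inl x => x
  | Sum.inr p => (p.1 : X)

/-- The height of a point of `X ∪ cyl(h,S)`: `0` on `X`, and `t` at a cylinder point
`(s,t)`. -/
def height {S : Set X} {h : ℝ} : BasePt S h → ℝ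
  | Sum.inl _ => 0
  | Sum.inr p => (p.2 : ℝ)

/-- The canonical inclusion `X ∪ cyl(h,S) → X_{h,S}`. -/
def baseEmb {S : Set X} {h : ℝ} : BasePt S h → GlueSp S h
  | Sum.inl x => Quot.mk _ (Sum.inl x)
  | Sum.inr p => Quot.mk _ (Sum.inr (Sum.inl p))

end Trace

/-! ### Auxiliary material for Statement 6 -/

section TraceAux

open ENNReal

variable {X : Type*} [MetricSpace X]

/-- Generic: the cost of the endpoints bounds below the length. -/
lemma endpoint_le_elen {Y : Type*} (c : Y → Y → ENNReal) (p : ℝ → Y) :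
    c (p 0) (p 1) ≤ elen c p := by
  have hmem : ∀ i : ℕ, (if i = 0 then (0:ℝ) else 1) ∈ Set.Icc (0:ℝ) 1 := by
    intro i; by_cases hi : i = 0 <;> simp [hi]
  have hmono : Monotone (fun i : ℕ => if i = 0 then (0:ℝ) else 1) := by
    intro a b hab
    by_cases ha : a = 0
    · by_cases hb : b = 0 <;> simp [ha, hb]
    · have hb : b ≠ 0 := by omega
      simp [ha, hb]
  have := le_iSup (fun q : ℕ × {u : ℕ → ℝ // Monotone u ∧ ∀ i, u i ∈ Set.Icc (0:ℝ) 1} =>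
      ∑ i ∈ Finset.range q.1, c (p (q.2.1 i)) (p (q.2.1 (i + 1))))
    (⟨1, ⟨fun i => if i = 0 then 0 else 1, hmono, hmem⟩⟩)
  simpa [elen] using this
lemma elen_le_of_forall {Y : Type*} {c : Y → Y → ENNReal} {p : ℝ → Y} {L : ENNReal}
    (H : ∀ (n : ℕ) (u : ℕ → ℝ), Monotone u → (∀ i, u i ∈ Set.Icc (0:ℝ) 1) →
      ∑ i ∈ Finset.range n, c (p (u i)) (p (u (i + 1))) ≤ L) :
    elen c p ≤ L :=
  iSup_le fun q => H q.1 q.2.1 q.2.2.1 q.2.2.2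

/-- Telescoping bound for `ofReal` of absolute differences. -/
lemma ofReal_abs_telescope (G : ℕ → ℝ) (n : ℕ) :
    ENNReal.ofReal |G 0 - G n| ≤ ∑ i ∈ Finset.range n, ENNReal.ofReal |G i - G (i + 1)| := by
  induction n with
  | zero => simp
  | succ n ih =>
    rw [Finset.sum_range_succ]
    calc ENNReal.ofReal |G 0 - G (n + 1)|
        ≤ ENNReal.ofReal (|G 0 - G n| + |G n - G (n + 1)|) := by
          apply ENNReal.ofReal_le_ofReal
          have := abs_sub_le (G 0) (G n) (G (n+1)); linarith
      _ ≤ ENNReal.ofReal |G 0 - G n| + ENNReal.ofReal |G n - G (n + 1)| :=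
          ENNReal.ofReal_add_le
      _ ≤ _ := add_le_add ih le_rfl

/-- The potential function on the disjoint union, measuring distance from `x0 ∈ X`. -/
noncomputable def pot (x0 : X) (S : Set X) (h : ℝ) : PrePt S h → ℝ
  | Sum.inl x => dist x0 x
  | Sum.inr (Sum.inl p) => dist x0 (p.1 : X)
  | Sum.inr (Sum.inr p) =>
      min (dist x0 (p.1 : X)) ((h + Metric.diam S - (p.2 : ℝ)) + Metric.infDist x0 S)

lemma pot_glue (x0 : X) {S : Set X} (hS : IsCompact S) {h : ℝ} (hh : 0 ≤ h) :
    ∀ a b, Glue S h a b → pot x0 S h a = pot x0 S h b := by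
  intro a b hab
  induction hab with
  | base s t ht => rfl
  | mid s t u ht hu =>
      have h1 : dist x0 (s : X) ≤ Metric.infDist x0 S + Metric.diam S :=
        Metric.dist_le_infDist_add_diam hS.isBounded s.2
      simp only [pot, hu]
      rw [eq_comm, min_eq_left]
      linarith
  | apex p q hp hq =>
      have h1 : Metric.infDist x0 S ≤ dist x0 (p.1 : X) :=
        Metric.infDist_le_dist_of_mem p.1.2
      have h2 : Metric.infDist x0 S ≤ dist x0 (q.1 : X) :=
        Metric.infDist_le_dist_of_mem q.1.2
      simp only [pot, hp, hq]
      rw [min_eq_right (by linarith), min_eq_right (by linarith)]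

lemma pot_lip (x0 : X) {S : Set X} {h : ℝ} :
    ∀ a b, ENNReal.ofReal |pot x0 S h a - pot x0 S h b| ≤ preDist S h a b := by
  intro a b
  match a, b with
  | Sum.inl x, Sum.inl y =>
      apply ENNReal.ofReal_le_ofReal
      have := abs_dist_sub_le x y x0
      simpa [pot, dist_comm] using this
  | Sum.inr (Sum.inl p), Sum.inr (Sum.inl q) =>
      apply ENNReal.ofReal_le_ofReal
      have h2 : (0:ℝ) ≤ |(p.2 : ℝ) - (q.2 : ℝ)| := abs_nonneg _
      simp only [pot, cylDist]
      rw [dist_comm x0 (p.1:X), dist_comm x0 (q.1:X)]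
      have h1 := abs_dist_sub_le (p.1 : X) (q.1 : X) x0
      linarith
  | Sum.inr (Sum.inr p), Sum.inr (Sum.inr q) =>
      apply ENNReal.ofReal_le_ofReal
      set H := h + Metric.diam S with hH
      set c0 := Metric.infDist x0 S with hc0
      have hA : |dist x0 (p.1:X) - dist x0 (q.1:X)| ≤ dist (p.1:X) (q.1:X) := by
        rw [dist_comm x0 (p.1:X), dist_comm x0 (q.1:X)]
        exact abs_dist_sub_le _ _ _
      have hp2 : (p.2 : ℝ) ≤ H := p.2.2.2
      have hq2 : (q.2 : ℝ) ≤ H := q.2.2.2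
      have hcp : c0 ≤ dist x0 (p.1:X) := Metric.infDist_le_dist_of_mem p.1.2
      have hcq : c0 ≤ dist x0 (q.1:X) := Metric.infDist_le_dist_of_mem q.1.2
      simp only [pot, topDist, ← hH, ← hc0]
      apply le_min
      · calc |min (dist x0 (p.1:X)) (H - (p.2:ℝ) + c0) -
              min (dist x0 (q.1:X)) (H - (q.2:ℝ) + c0)|
            ≤ max |dist x0 (p.1:X) - dist x0 (q.1:X)|
                |(H - (p.2:ℝ) + c0) - (H - (q.2:ℝ) + c0)| := abs_min_sub_min_le_max _ _ _ _
          _ ≤ dist (p.1:X) (q.1:X) + |(p.2:ℝ) - (q.2:ℝ)| := by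
              apply max_le
              · have := abs_nonneg ((p.2:ℝ) - (q.2:ℝ)); linarith
              · have : (H - (p.2:ℝ) + c0) - (H - (q.2:ℝ) + c0) = (q.2:ℝ) - (p.2:ℝ) := by ring
                rw [this, abs_sub_comm]
                have := dist_nonneg (x := (p.1:X)) (y := (q.1:X)); linarith
      · rw [abs_sub_le_iff]
        constructor
        · have h1 : min (dist x0 (p.1:X)) (H - (p.2:ℝ) + c0) ≤ H - (p.2:ℝ) + c0 :=
            min_le_right _ _
          have h2 : c0 ≤ min (dist x0 (q.1:X)) (H - (q.2:ℝ) + c0) :=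
            le_min hcq (by linarith)
          linarith
        · have h1 : min (dist x0 (q.1:X)) (H - (q.2:ℝ) + c0) ≤ H - (q.2:ℝ) + c0 :=
            min_le_right _ _
          have h2 : c0 ≤ min (dist x0 (p.1:X)) (H - (p.2:ℝ) + c0) :=
            le_min hcp (by linarith)
          linarith
  | Sum.inl _, Sum.inr (Sum.inl _) => exact le_top
  | Sum.inl _, Sum.inr (Sum.inr _) => exact le_top
  | Sum.inr (Sum.inl _), Sum.inl _ => exact le_top
  | Sum.inr (Sum.inr _), Sum.inl _ => exact le_top
  | Sum.inr (Sum.inl _), Sum.inr (Sum.inr _) => exact le_top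
  | Sum.inr (Sum.inr _), Sum.inr (Sum.inl _) => exact le_top

end TraceAux
section TraceAux2
open ENNReal
variable {X : Type*} [MetricSpace X]

lemma glue_lower {S : Set X} (hS : IsCompact S) {h : ℝ} (hh : 0 ≤ h)
    (w w' : BasePt S h) :
    ENNReal.ofReal (dist (trace w) (trace w')) ≤ hatDistE S h (baseEmb w) (baseEmb w') := by
  set x0 := trace w with hx0
  have hglue := pot_glue x0 hS (S := S) hh
  set gbar : GlueSp S h → ℝ := Quot.lift (pot x0 S h) hglue with hgbar
  rw [hatDistE, glueDist]
  refine le_iInf fun P => ?_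
  -- G i : value of potential at the i-th breakpoint
  set G : ℕ → ℝ := fun i =>
    if hi : i ≤ P.m then pot x0 S h (P.piece ⟨i, Nat.lt_succ_of_le hi⟩ 0)
    else pot x0 S h (P.piece (Fin.last P.m) 1) with hG
  have hG0 : G 0 = 0 := by
    have h1 : gbar (Quot.mk _ (P.piece 0 0)) = gbar (baseEmb w) := by rw [P.first]
    have h2 : G 0 = pot x0 S h (P.piece 0 0) := by
      simp only [hG, dif_pos (Nat.zero_le P.m)]
      congr 1
    rw [h2]
    have h3 : gbar (Quot.mk _ (P.piece 0 0)) = pot x0 S h (P.piece 0 0) := rfl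
    rw [← h3, h1]
    cases w with
    | inl x => simp [baseEmb, hgbar, pot, hx0, trace]
    | inr p => simp [baseEmb, hgbar, pot, hx0, trace]
  have hGlast : G (P.m + 1) = dist (trace w) (trace w') := by
    have h2 : G (P.m + 1) = pot x0 S h (P.piece (Fin.last P.m) 1) := by
      simp [hG]
    have h1 : gbar (Quot.mk _ (P.piece (Fin.last P.m) 1)) = gbar (baseEmb w') := by rw [P.last]
    rw [h2]
    have h3 : gbar (Quot.mk _ (P.piece (Fin.last P.m) 1)) = pot x0 S h (P.piece (Fin.last P.m) 1) := rfl
    rw [← h3, h1]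
    cases w' with
    | inl x => simp [baseEmb, hgbar, pot, trace, hx0]
    | inr p => simp [baseEmb, hgbar, pot, trace, hx0]
  -- per-piece bound
  have hstep : ∀ i : Fin (P.m + 1),
      ENNReal.ofReal |G i.1 - G (i.1 + 1)| ≤ elen (preDist S h) (P.piece i) := by
    intro i
    have hi : i.1 ≤ P.m := Nat.lt_succ_iff.mp i.2
    have hGi : G i.1 = pot x0 S h (P.piece i 0) := by
      simp only [hG, dif_pos hi]
    have hGi1 : G (i.1 + 1) = pot x0 S h (P.piece i 1) := by
      by_cases hlt : i.1 + 1 ≤ P.m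
      · have hlt' : i.1 < P.m := hlt
        simp only [hG, dif_pos hlt]
        have hlink := P.link ⟨i.1, hlt'⟩
        have h4 : gbar (Quot.mk _ (P.piece (Fin.castSucc ⟨i.1, hlt'⟩) 1)) =
            gbar (Quot.mk _ (P.piece (Fin.succ ⟨i.1, hlt'⟩) 0)) := by rw [hlink]
        have h5 : (Fin.castSucc (⟨i.1, hlt'⟩ : Fin P.m)) = i := Fin.ext rfl
        have h6 : (Fin.succ (⟨i.1, hlt'⟩ : Fin P.m)) = (⟨i.1 + 1, Nat.lt_succ_of_le hlt⟩ : Fin (P.m + 1)) := Fin.ext rfl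
        rw [h5, h6] at h4
        exact h4.symm
      · have him : i.1 = P.m := by omega
        simp only [hG, dif_neg hlt]
        congr 2
        exact (Fin.ext him.symm : Fin.last P.m = i)
    rw [hGi, hGi1]
    calc ENNReal.ofReal |pot x0 S h (P.piece i 0) - pot x0 S h (P.piece i 1)|
        ≤ preDist S h (P.piece i 0) (P.piece i 1) := pot_lip x0 _ _
      _ ≤ elen (preDist S h) (P.piece i) := endpoint_le_elen _ _
  calc ENNReal.ofReal (dist (trace w) (trace w'))
      = ENNReal.ofReal |G 0 - G (P.m + 1)| := by rw [hG0, hGlast]; simp [abs_of_nonneg dist_nonneg]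
    _ ≤ ∑ i ∈ Finset.range (P.m + 1), ENNReal.ofReal |G i - G (i + 1)| :=
        ofReal_abs_telescope G (P.m + 1)
    _ = ∑ i : Fin (P.m + 1), ENNReal.ofReal |G i.1 - G (i.1 + 1)| :=
        (Fin.sum_univ_eq_sum_range (fun i => ENNReal.ofReal |G i - G (i + 1)|) (P.m + 1)).symm
    _ ≤ ∑ i : Fin (P.m + 1), elen (preDist S h) (P.piece i) :=
        Finset.sum_le_sum fun i _ => hstep i
    _ = P.len := rfl

end TraceAux2
section TraceAux3
open ENNReal
variable {X : Type*} [MetricSpace X]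

/-- Clamp to `[0,1]`. -/
noncomputable def clamp01 (r : ℝ) : ℝ := max 0 (min 1 r)

lemma clamp01_nonneg (r : ℝ) : 0 ≤ clamp01 r := le_max_left _ _
lemma clamp01_le_one (r : ℝ) : clamp01 r ≤ 1 := by
  apply max_le (by norm_num) (min_le_left _ _)
lemma clamp01_mono : Monotone clamp01 := fun a b hab =>
  max_le_max le_rfl (min_le_min le_rfl hab)
lemma clamp01_one : clamp01 1 = 1 := by simp [clamp01]
lemma clamp01_zero : clamp01 0 = 0 := by simp [clamp01]
lemma clamp01_lip (a b : ℝ) : |clamp01 a - clamp01 b| ≤ |a - b| := by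
  have h1 : |min 1 a - min 1 b| ≤ |a - b| := abs_min_sub_min_le_max 1 a 1 b |>.trans (by simp)
  calc |clamp01 a - clamp01 b| = |max 0 (min 1 a) - max 0 (min 1 b)| := rfl
    _ ≤ max |0 - 0| |min 1 a - min 1 b| := abs_max_sub_max_le_max _ _ _ _
    _ ≤ |a - b| := by simpa using h1

/-- The vertical-in-the-cylinder path from `(s, t·clamp01 (f u))`. -/
noncomputable def vertPath {S : Set X} {h : ℝ} (hh : 0 ≤ h) (p : CylPt S h) (f : ℝ → ℝ) :
    ℝ → PrePt S h := fun u =>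
  Sum.inr (Sum.inl (p.1, ⟨(p.2 : ℝ) * clamp01 (f u),
    ⟨mul_nonneg p.2.2.1 (clamp01_nonneg _),
     le_trans (mul_le_of_le_one_right p.2.2.1 (clamp01_le_one _)) p.2.2.2⟩⟩))

lemma econt_vert {S : Set X} {h : ℝ} (hh : 0 ≤ h) (p : CylPt S h) (f : ℝ → ℝ)
    (hf : ∀ a b, |f a - f b| ≤ |a - b|) :
    econt (preDist S h) (vertPath hh p f) := by
  intro t ht ε hε
  by_cases hT : ε = ⊤
  · refine ⟨1, one_pos, fun t' _ _ => ?_⟩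
    rw [hT]
    simp only [preDist, vertPath]
    exact ENNReal.ofReal_lt_top
  · set C := (p.2 : ℝ) with hC
    have hC0 : 0 ≤ C := p.2.2.1
    have hεt : 0 < ε.toReal := ENNReal.toReal_pos hε.ne' hT
    refine ⟨ε.toReal / (C + 1), by positivity, fun t' _ hlt => ?_⟩
    have hcost : preDist S h (vertPath hh p f t) (vertPath hh p f t') =
        ENNReal.ofReal (C * |clamp01 (f t) - clamp01 (f t')|) := by
      simp only [preDist, vertPath, cylDist, dist_self, zero_add]
      rw [← mul_sub, abs_mul, abs_of_nonneg hC0, hC]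
    rw [hcost]
    rw [ENNReal.ofReal_lt_iff_lt_toReal (by positivity) hT]
    have h1 : |clamp01 (f t) - clamp01 (f t')| ≤ |t - t'| :=
      (clamp01_lip _ _).trans (hf _ _)
    have h2 : |t - t'| < ε.toReal / (C + 1) := by rwa [abs_sub_comm]
    calc C * |clamp01 (f t) - clamp01 (f t')| ≤ C * |t - t'| :=
          mul_le_mul_of_nonneg_left h1 hC0
      _ < ε.toReal := by
          have : C * |t - t'| < C * (ε.toReal / (C + 1)) + ε.toReal / (C + 1) := by
            nlinarith [abs_nonneg (t - t')]
          calc C * |t - t'| < (C + 1) * (ε.toReal / (C + 1)) := by linarith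
            _ = ε.toReal := by field_simp

lemma elen_vert {S : Set X} {h : ℝ} (hh : 0 ≤ h) (p : CylPt S h) (f : ℝ → ℝ)
    (hf : Monotone f ∨ Antitone f) :
    elen (preDist S h) (vertPath hh p f) ≤ ENNReal.ofReal (p.2 : ℝ) := by
  set C := (p.2 : ℝ) with hC
  have hC0 : 0 ≤ C := p.2.2.1
  apply elen_le_of_forall
  intro n u hu huI
  set g : ℕ → ℝ := fun i => C * clamp01 (f (u i)) with hg
  have hg0 : ∀ i, 0 ≤ g i := fun i => mul_nonneg hC0 (clamp01_nonneg _)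
  have hgC : ∀ i, g i ≤ C := fun i => mul_le_of_le_one_right hC0 (clamp01_le_one _)
  have hterm : ∀ i, preDist S h (vertPath hh p f (u i)) (vertPath hh p f (u (i+1))) =
      ENNReal.ofReal |g i - g (i+1)| := by
    intro i
    simp [preDist, vertPath, cylDist, hg, mul_sub]
    rfl
  cases hf with
  | inl hmono =>
      have hmg : Monotone g := fun a b hab =>
        mul_le_mul_of_nonneg_left (clamp01_mono (hmono (hu hab))) hC0
      calc ∑ i ∈ Finset.range n, preDist S h (vertPath hh p f (u i)) (vertPath hh p f (u (i+1)))
          = ∑ i ∈ Finset.range n, ENNReal.ofReal (g (i+1) - g i) := by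
            refine Finset.sum_congr rfl fun i _ => ?_
            rw [hterm i, abs_sub_comm, abs_of_nonneg (by linarith [hmg (Nat.le_succ i)])]
        _ = ENNReal.ofReal (∑ i ∈ Finset.range n, (g (i+1) - g i)) :=
            (ENNReal.ofReal_sum_of_nonneg fun i _ => by linarith [hmg (Nat.le_succ i)]).symm
        _ = ENNReal.ofReal (g n - g 0) := by rw [Finset.sum_range_sub g n]
        _ ≤ ENNReal.ofReal C := ENNReal.ofReal_le_ofReal (by linarith [hgC n, hg0 0])
  | inr hanti =>
      have hmg : Antitone g := fun a b hab =>
        mul_le_mul_of_nonneg_left (clamp01_mono (hanti (hu hab))) hC0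
      calc ∑ i ∈ Finset.range n, preDist S h (vertPath hh p f (u i)) (vertPath hh p f (u (i+1)))
          = ∑ i ∈ Finset.range n, ENNReal.ofReal (g i - g (i+1)) := by
            refine Finset.sum_congr rfl fun i _ => ?_
            rw [hterm i, abs_of_nonneg (by linarith [hmg (Nat.le_succ i)])]
        _ = ENNReal.ofReal (∑ i ∈ Finset.range n, (g i - g (i+1))) :=
            (ENNReal.ofReal_sum_of_nonneg fun i _ => by linarith [hmg (Nat.le_succ i)]).symm
        _ = ENNReal.ofReal (g 0 - g n) := by rw [Finset.sum_range_sub' g n]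
        _ ≤ ENNReal.ofReal C := ENNReal.ofReal_le_ofReal (by linarith [hgC 0, hg0 n])

end TraceAux3
section TraceAux4
open ENNReal
variable {X : Type*} [MetricSpace X]

lemma econt_constX {S : Set X} {h : ℝ} (x : X) :
    econt (preDist S h) (fun _ => Sum.inl x) := by
  intro t ht ε hε
  exact ⟨1, one_pos, fun t' _ _ => by simpa [preDist] using hε⟩

lemma elen_constX {S : Set X} {h : ℝ} (x : X) :
    elen (preDist S h) (fun _ => Sum.inl x) ≤ 0 := by
  apply elen_le_of_forall
  intro n u _ _
  simp [preDist]

/-- Descending piece: from `w` down to the copy of `X`. -/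
noncomputable def startPiece {S : Set X} {h : ℝ} (hh : 0 ≤ h) :
    BasePt S h → ℝ → PrePt S h
  | Sum.inl x => fun _ => Sum.inl x
  | Sum.inr p => vertPath hh p (fun u => 1 - u)

/-- Ascending piece: from the copy of `X` up to `w'`. -/
noncomputable def endPiece {S : Set X} {h : ℝ} (hh : 0 ≤ h) :
    BasePt S h → ℝ → PrePt S h
  | Sum.inl x => fun _ => Sum.inl x
  | Sum.inr p => vertPath hh p (fun u => u)

lemma econt_startPiece {S : Set X} {h : ℝ} (hh : 0 ≤ h) (w : BasePt S h) :
    econt (preDist S h) (startPiece hh w) := by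
  cases w with
  | inl x => exact econt_constX x
  | inr p =>
      exact econt_vert hh p _ (fun a b => by rw [show (1-a)-(1-b) = b - a by ring, abs_sub_comm])

lemma econt_endPiece {S : Set X} {h : ℝ} (hh : 0 ≤ h) (w : BasePt S h) :
    econt (preDist S h) (endPiece hh w) := by
  cases w with
  | inl x => exact econt_constX x
  | inr p => exact econt_vert hh p _ (fun a b => le_rfl)

lemma elen_startPiece_lt_top {S : Set X} {h : ℝ} (hh : 0 ≤ h) (w : BasePt S h) :
    elen (preDist S h) (startPiece hh w) < ⊤ := by
  cases w with
  | inl x => exact lt_of_le_of_lt (elen_constX x) (by simp)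
  | inr p =>
      exact lt_of_le_of_lt
        (elen_vert hh p _ (Or.inr (fun a b hab => by dsimp only; linarith)))
        ENNReal.ofReal_lt_top

lemma elen_endPiece_lt_top {S : Set X} {h : ℝ} (hh : 0 ≤ h) (w : BasePt S h) :
    elen (preDist S h) (endPiece hh w) < ⊤ := by
  cases w with
  | inl x => exact lt_of_le_of_lt (elen_constX x) (by simp)
  | inr p =>
      exact lt_of_le_of_lt
        (elen_vert hh p _ (Or.inl (fun a b hab => hab)))
        ENNReal.ofReal_lt_top

lemma startPiece_zero {S : Set X} {h : ℝ} (hh : 0 ≤ h) (w : BasePt S h) :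
    Quot.mk (Glue S h) (startPiece hh w 0) = baseEmb w := by
  cases w with
  | inl x => rfl
  | inr p =>
      have hval : ((p.2 : ℝ) * clamp01 (1 - 0)) = (p.2 : ℝ) := by norm_num [clamp01_one]
      exact congrArg (fun q : CylPt S h => Quot.mk (Glue S h) (Sum.inr (Sum.inl q)))
        (Prod.ext rfl (Subtype.ext hval))

lemma startPiece_one {S : Set X} {h : ℝ} (hh : 0 ≤ h) (w : BasePt S h) :
    Quot.mk (Glue S h) (startPiece hh w 1) = Quot.mk _ (Sum.inl (trace w)) := by
  cases w with
  | inl x => rfl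
  | inr p =>
      exact (Quot.sound (Glue.base p.1 _ (by norm_num [clamp01_zero]))).symm

lemma endPiece_zero {S : Set X} {h : ℝ} (hh : 0 ≤ h) (w : BasePt S h) :
    Quot.mk (Glue S h) (endPiece hh w 0) = Quot.mk _ (Sum.inl (trace w)) := by
  cases w with
  | inl x => rfl
  | inr p =>
      exact (Quot.sound (Glue.base p.1 _ (by norm_num [clamp01_zero]))).symm

lemma endPiece_one {S : Set X} {h : ℝ} (hh : 0 ≤ h) (w : BasePt S h) :
    Quot.mk (Glue S h) (endPiece hh w 1) = baseEmb w := by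
  cases w with
  | inl x => rfl
  | inr p =>
      have hval : ((p.2 : ℝ) * clamp01 1) = (p.2 : ℝ) := by norm_num [clamp01_one]
      exact congrArg (fun q : CylPt S h => Quot.mk (Glue S h) (Sum.inr (Sum.inl q)))
        (Prod.ext rfl (Subtype.ext hval))

lemma hatDistE_ne_top {S : Set X} {h : ℝ} (hh : 0 ≤ h)
    (hgeo : IsGeodesicD X (fun x y => dist x y)) (w w' : BasePt S h) :
    hatDistE S h (baseEmb w) (baseEmb w') ≠ ⊤ := by
  obtain ⟨gp, gcont, g0, g1, glen⟩ := hgeo (trace w) (trace w')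
  have gcont' : econt (preDist S h) (fun u => Sum.inl (gp u) : ℝ → PrePt S h) := gcont
  have glen' : elen (preDist S h) (fun u => Sum.inl (gp u) : ℝ → PrePt S h) =
      ENNReal.ofReal (dist (trace w) (trace w')) := glen
  set P : PiecewisePath (preDist S h) (Glue S h) (baseEmb w) (baseEmb w') :=
    { m := 2
      piece := ![startPiece hh w, fun u => Sum.inl (gp u), endPiece hh w']
      cont := by
        intro i
        fin_cases i
        · simpa using econt_startPiece hh w
        · simpa using gcont'
        · simpa using econt_endPiece hh w'
      first := by simpa using startPiece_zero hh w
      last := by simpa using endPiece_one hh w'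
      link := by
        intro i
        fin_cases i
        · simpa [g0] using startPiece_one hh w
        · simpa [g1] using (endPiece_zero hh w').symm } with hP
  have hle : hatDistE S h (baseEmb w) (baseEmb w') ≤ P.len := iInf_le _ P
  have hfin : P.len < ⊤ := by
    have : P.len = elen (preDist S h) (startPiece hh w) +
        elen (preDist S h) (fun u => Sum.inl (gp u)) +
        elen (preDist S h) (endPiece hh w') := by
      rw [hP]
      show ∑ i : Fin 3, _ = _
      rw [Fin.sum_univ_three]
      simp
    rw [this, glen']
    exact ENNReal.add_lt_top.mpr ⟨ENNReal.add_lt_top.mpr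
      ⟨elen_startPiece_lt_top hh w, ENNReal.ofReal_lt_top⟩, elen_endPiece_lt_top hh w'⟩
  exact (lt_of_le_of_lt hle hfin).ne

end TraceAux4
/-- The trace map `π` is `1`-Lipschitz on `X ∪ cyl(h,S)` with respect to
the metric `d'` of `X_{h,S}`, and consequently for every continuous path `p` with image in
`X ∪ cyl(h,S)` the length of `π ∘ p` in `(X,d)` is at most the length of `p` in
`(X_{h,S},d')`. -/
theorem trace_lipschitz_and_length {X : Type*} [MetricSpace X]
    (hX : GameSpaceD X (fun x y => dist x y)) (S : Set X) (hS : IsCompact S)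
    (hSne : S.Nonempty) (h : ℝ) (hh : 0 < h) :
    (∀ w w' : BasePt S h,
        dist (trace w) (trace w') ≤ hatDist S h (baseEmb w) (baseEmb w')) ∧
      (∀ p : ℝ → BasePt S h,
        econt (fun a b => ENNReal.ofReal (hatDist S h (baseEmb a) (baseEmb b))) p →
        elen (fun a b => ENNReal.ofReal (dist (trace a) (trace b))) p ≤
          elen (fun a b => ENNReal.ofReal (hatDist S h (baseEmb a) (baseEmb b))) p) := by
  have hgeo : IsGeodesicD X (fun x y => dist x y) := hX.2.2.2
  have hlip : ∀ w w' : BasePt S h,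
      dist (trace w) (trace w') ≤ hatDist S h (baseEmb w) (baseEmb w') := by
    intro w w'
    have hlow := glue_lower hS hh.le w w'
    have hfin := hatDistE_ne_top hh.le hgeo w w'
    have hmono := ENNReal.toReal_mono hfin hlow
    rwa [ENNReal.toReal_ofReal dist_nonneg] at hmono
  refine ⟨hlip, fun p _ => ?_⟩
  exact iSup_mono fun q => Finset.sum_le_sum fun i _ =>
    ENNReal.ofReal_le_ofReal (hlip _ _)
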